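/- Let t be a contraction on H with Tr(1 − tt*) < ∞, and assume t is pure in the sense that t^k (t*)^k h → 0 for every h ∈ H. Then Tr(1 − t*t) is finite and lim_{k→∞} Tr(1 − t^k (t*)^k)/k + Tr(1 − t*t) = Tr(1 − tt*); i.e., the curvature of Θ(a) = t a t* equals Tr(1 − tt*) − Tr(1 − t*t). -/

import Mathlib

set_option maxHeartbeats 1000000
set_option synthInstance.maxHeartbeats 1000000

open Filter Finset ContinuousLinearMap
open scoped ENNReal Topology NNReal

noncomputable def opTrace {H : Type*} [NormedAddCommGroup H] [InnerProductSpace ℂ H]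
    [CompleteSpace H] {ι : Type*} (b : HilbertBasis ι ℂ H) (A : H →L[ℂ] H) : ℝ≥0∞ :=
  ∑' i, ENNReal.ofReal (inner ℂ (b i) (A (b i)) : ℂ).re

section helpers
variable {H : Type*} [NormedAddCommGroup H] [InnerProductSpace ℂ H] [CompleteSpace H]
  {ι : Type*}

local notation "⟪" x ", " y "⟫" => @inner ℂ _ _ x y

omit [CompleteSpace H] in
lemma my_parseval (b : HilbertBasis ι ℂ H) (x : H) :
    HasSum (fun i => ‖(⟪b i, x⟫ : ℂ)‖ ^ 2) (‖x‖ ^ 2) := by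
  have h := lp.hasSum_norm (p := 2) (by norm_num) (b.repr x)
  have h2 : ∀ y : lp (fun _ : ι => ℂ) 2, ‖y‖ ^ ((2:ℝ≥0∞).toReal) = ‖y‖ ^ 2 := by
    intro y
    rw [show ((2:ℝ≥0∞).toReal) = ((2:ℕ):ℝ) by norm_num, Real.rpow_natCast]
  have h3 : ∀ i, ‖b.repr x i‖ ^ ((2:ℝ≥0∞).toReal) = ‖(⟪b i, x⟫ : ℂ)‖ ^ 2 := by
    intro i
    rw [show ((2:ℝ≥0∞).toReal) = ((2:ℕ):ℝ) by norm_num, Real.rpow_natCast,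
      b.repr_apply_apply]
  rw [h2] at h
  simp only [h3] at h
  rwa [b.repr.norm_map x] at h

lemma my_flip (b : HilbertBasis ι ℂ H) (A : H →L[ℂ] H) :
    ∑' i, ENNReal.ofReal (‖A (b i)‖ ^ 2) = ∑' i, ENNReal.ofReal (‖(star A) (b i)‖ ^ 2) := by
  have key : ∀ (x : H), ENNReal.ofReal (‖x‖ ^ 2) = ∑' k, ENNReal.ofReal (‖(⟪b k, x⟫ : ℂ)‖ ^ 2) := by
    intro x
    rw [← (my_parseval b x).tsum_eq]
    exact ENNReal.ofReal_tsum_of_nonneg (fun k => by positivity) (my_parseval b x).summable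
  have swap : ∀ (i k : ι), ‖(⟪b k, A (b i)⟫ : ℂ)‖ = ‖(⟪b i, (star A) (b k)⟫ : ℂ)‖ := by
    intro i k
    rw [ContinuousLinearMap.star_eq_adjoint, ← ContinuousLinearMap.adjoint_inner_left,
      norm_inner_symm]
  calc ∑' i, ENNReal.ofReal (‖A (b i)‖ ^ 2)
      = ∑' i, ∑' k, ENNReal.ofReal (‖(⟪b k, A (b i)⟫ : ℂ)‖ ^ 2) := by simp only [key]
    _ = ∑' k, ∑' i, ENNReal.ofReal (‖(⟪b k, A (b i)⟫ : ℂ)‖ ^ 2) := ENNReal.tsum_comm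
    _ = ∑' k, ∑' i, ENNReal.ofReal (‖(⟪b i, (star A) (b k)⟫ : ℂ)‖ ^ 2) := by
        simp only [swap]
    _ = ∑' k, ENNReal.ofReal (‖(star A) (b k)‖ ^ 2) := by simp only [← key]

lemma my_defect (T : H →L[ℂ] H) (x : H) :
    (inner ℂ x ((1 - T * star T) x) : ℂ).re = ‖x‖ ^ 2 - ‖(star T) x‖ ^ 2 := by
  have e : ((1 - T * star T) x) = x - T ((star T) x) := by
    simp [ContinuousLinearMap.sub_apply, ContinuousLinearMap.mul_apply]
  rw [e, inner_sub_right]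
  have h1 : (⟪x, T ((star T) x)⟫ : ℂ) = ⟪(star T) x, (star T) x⟫ := by
    rw [ContinuousLinearMap.star_eq_adjoint, ← ContinuousLinearMap.adjoint_inner_left]
  rw [h1, Complex.sub_re]
  have e2 : (⟪x, x⟫ : ℂ).re = ‖x‖ ^ 2 := by
    rw [← RCLike.re_to_complex]; exact inner_self_eq_norm_sq x
  have e3 : (⟪(star T) x, (star T) x⟫ : ℂ).re = ‖(star T) x‖ ^ 2 := by
    rw [← RCLike.re_to_complex]; exact inner_self_eq_norm_sq _
  rw [e2, e3]

lemma my_pos (T : H →L[ℂ] H) (h : ∀ x : H, ‖(star T) x‖ ≤ ‖x‖) :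
    0 ≤ 1 - T * star T := by
  rw [ContinuousLinearMap.nonneg_iff_isPositive, ContinuousLinearMap.isPositive_def']
  constructor
  · rw [isSelfAdjoint_iff]
    simp [star_sub, star_mul]
  · intro x
    rw [ContinuousLinearMap.reApplyInnerSelf, RCLike.re_to_complex]
    have h1 : (⟪(1 - T * star T) x, x⟫ : ℂ).re = (⟪x, (1 - T * star T) x⟫ : ℂ).re := by
      rw [← inner_conj_symm x ((1 - T * star T) x), Complex.conj_re]
    rw [h1, my_defect T x]
    have h2 := h x
    nlinarith [norm_nonneg ((star T) x), norm_nonneg x]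

lemma my_sqrt_norm (T C : H →L[ℂ] H) (hC : IsSelfAdjoint C)
    (hsq : C * C = 1 - T * star T) (x : H) :
    ‖C x‖ ^ 2 = ‖x‖ ^ 2 - ‖(star T) x‖ ^ 2 := by
  have hadj : ContinuousLinearMap.adjoint C = C := by
    rw [← ContinuousLinearMap.star_eq_adjoint, hC.star_eq]
  have h1 : (⟪C x, C x⟫ : ℂ) = ⟪x, (C * C) x⟫ := by
    conv_rhs => rw [ContinuousLinearMap.mul_apply,
      ← ContinuousLinearMap.adjoint_inner_left C, hadj]
  have h2 : ‖C x‖ ^ 2 = (⟪C x, C x⟫ : ℂ).re := by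
    rw [← RCLike.re_to_complex]; exact (inner_self_eq_norm_sq _).symm
  rw [h2, h1, hsq, my_defect T x]

lemma my_telescope (v : ℕ → ℝ) (hanti : ∀ j, v (j + 1) ≤ v j) {l : ℝ}
    (hl : Tendsto v atTop (𝓝 l)) :
    ∑' j, ENNReal.ofReal (v j - v (j + 1)) = ENNReal.ofReal (v 0 - l) := by
  have hpart : ∀ k, ∑ j ∈ range k, ENNReal.ofReal (v j - v (j + 1))
      = ENNReal.ofReal (v 0 - v k) := by
    intro k
    rw [← ENNReal.ofReal_sum_of_nonneg (fun j _ => by linarith [hanti j]),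
      Finset.sum_range_sub' v]
  have h2 : Tendsto (fun k => ∑ j ∈ range k, ENNReal.ofReal (v j - v (j + 1))) atTop
      (𝓝 (ENNReal.ofReal (v 0 - l))) := by
    simp only [hpart]
    exact (ENNReal.continuous_ofReal.tendsto _).comp (tendsto_const_nhds.sub hl)
  exact tendsto_nhds_unique (ENNReal.tendsto_nat_tsum _) h2

end helpers

theorem parrott_pure_formula
    {H : Type*} [NormedAddCommGroup H] [InnerProductSpace ℂ H] [CompleteSpace H]
    {ι : Type*} (b : HilbertBasis ι ℂ H)
    (t : H →L[ℂ] H) (ht : ‖t‖ ≤ 1)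
    (hfin : opTrace b (1 - t * star t) ≠ ⊤)
    (hpure : ∀ h : H,
      Filter.Tendsto (fun k => (t ^ k * (star t) ^ k) h) Filter.atTop (nhds 0)) :
    opTrace b (1 - star t * t) ≠ ⊤ ∧
    ∃ L : ℝ≥0∞,
      Filter.Tendsto (fun (k : ℕ) => opTrace b (1 - t ^ k * (star t) ^ k) / (k : ℝ≥0∞))
        Filter.atTop (nhds L) ∧
      L + opTrace b (1 - star t * t) = opTrace b (1 - t * star t) := by
  classical
  have hcon_t : ∀ x : H, ‖t x‖ ≤ ‖x‖ := fun x => by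
    calc ‖t x‖ ≤ ‖t‖ * ‖x‖ := t.le_opNorm x
    _ ≤ 1 * ‖x‖ := mul_le_mul_of_nonneg_right ht (norm_nonneg x)
    _ = ‖x‖ := one_mul _
  have hcon_s : ∀ x : H, ‖(star t) x‖ ≤ ‖x‖ := fun x => by
    calc ‖(star t) x‖ ≤ ‖star t‖ * ‖x‖ := (star t).le_opNorm x
    _ ≤ 1 * ‖x‖ := mul_le_mul_of_nonneg_right (by rw [norm_star]; exact ht) (norm_nonneg x)
    _ = ‖x‖ := one_mul _
  have hpow_succ : ∀ (A : H →L[ℂ] H) (j : ℕ) (x : H), (A ^ (j+1)) x = A ((A ^ j) x) := by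
    intro A j x
    rw [pow_succ', ContinuousLinearMap.mul_apply]
  have hcon_spow : ∀ (j : ℕ) (x : H), ‖((star t) ^ (j+1)) x‖ ≤ ‖((star t) ^ j) x‖ := by
    intro j x
    rw [hpow_succ]
    exact hcon_s _
  have hcon_tpow : ∀ (j : ℕ) (x : H), ‖(t ^ (j+1)) x‖ ≤ ‖(t ^ j) x‖ := by
    intro j x
    rw [hpow_succ]
    exact hcon_t _
  -- defects are positive
  have hDstar : 0 ≤ 1 - t * star t := my_pos t hcon_s
  have hD : 0 ≤ 1 - star t * t := by
    have h := my_pos (star t) (by intro x; rw [star_star]; exact hcon_t x)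
    rwa [star_star] at h
  set C := CFC.sqrt (1 - t * star t) with hCdef
  set E := CFC.sqrt (1 - star t * t) with hEdef
  have hCsa : IsSelfAdjoint C :=
    ((ContinuousLinearMap.nonneg_iff_isPositive _).mp (CFC.sqrt_nonneg _)).isSelfAdjoint
  have hEsa : IsSelfAdjoint E :=
    ((ContinuousLinearMap.nonneg_iff_isPositive _).mp (CFC.sqrt_nonneg _)).isSelfAdjoint
  have hCsq : C * C = 1 - t * star t := CFC.sqrt_mul_sqrt_self _ hDstar
  have hEsq : E * E = 1 - star t * t := CFC.sqrt_mul_sqrt_self _ hD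
  have hCnorm : ∀ x : H, ‖C x‖ ^ 2 = ‖x‖ ^ 2 - ‖(star t) x‖ ^ 2 :=
    my_sqrt_norm t C hCsa hCsq
  have hEnorm : ∀ x : H, ‖E x‖ ^ 2 = ‖x‖ ^ 2 - ‖t x‖ ^ 2 := by
    intro x
    have h := my_sqrt_norm (star t) E hEsa (by rwa [star_star]) x
    rwa [star_star] at h
  -- the decreasing sequence u i j = ‖t^j (C (b i))‖²
  set u : ι → ℕ → ℝ := fun i j => ‖(t ^ j) (C (b i))‖ ^ 2 with hu
  have hu_nonneg : ∀ i j, 0 ≤ u i j := fun i j => by positivity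
  have hu_succ : ∀ i j, u i (j+1) ≤ u i j := by
    intro i j
    have h := hcon_tpow j (C (b i))
    simp only [hu]
    nlinarith [norm_nonneg ((t ^ (j+1)) (C (b i))), norm_nonneg ((t ^ j) (C (b i)))]
  have hu_anti : ∀ i, Antitone (u i) := fun i => antitone_nat_of_succ_le (hu_succ i)
  set l : ι → ℝ := fun i => ⨅ j, u i j with hldef
  have hbdd : ∀ i, BddBelow (Set.range (u i)) := by
    rintro i
    exact ⟨0, by rintro r ⟨j, rfl⟩; exact hu_nonneg i j⟩
  have hl_tend : ∀ i, Tendsto (u i) atTop (𝓝 (l i)) := fun i =>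
    tendsto_atTop_ciInf (hu_anti i) (hbdd i)
  have hl_nonneg : ∀ i, 0 ≤ l i := fun i => le_ciInf (fun j => hu_nonneg i j)
  have hl_le : ∀ i, l i ≤ u i 0 := fun i => ciInf_le (hbdd i) 0
  -- the ENNReal-valued traces
  set a : ℕ → ℝ≥0∞ := fun j => ∑' i, ENNReal.ofReal (u i j) with ha
  -- flip
  have flipC : ∀ j : ℕ,
      (∑' i, ENNReal.ofReal (‖C (((star t) ^ j) (b i))‖ ^ 2)) = a j := by
    intro j
    have hstar : star (C * (star t) ^ j) = t ^ j * C := by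
      rw [star_mul, star_pow, star_star, hCsa.star_eq]
    have h := my_flip b (C * (star t) ^ j)
    rw [hstar] at h
    simpa only [ContinuousLinearMap.mul_apply] using h
  -- trace formula for 1 - t^k (t*)^k
  have traceB : ∀ k : ℕ, opTrace b (1 - t ^ k * (star t) ^ k) = ∑ j ∈ range k, a j := by
    intro k
    have hper : ∀ i, (inner ℂ (b i) ((1 - t ^ k * (star t) ^ k) (b i)) : ℂ).re
        = ∑ j ∈ range k, (‖((star t) ^ j) (b i)‖ ^ 2 - ‖((star t) ^ (j+1)) (b i)‖ ^ 2) := by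
      intro i
      have h1 : (1 - t ^ k * (star t) ^ k) = 1 - (t ^ k) * star (t ^ k) := by rw [star_pow]
      rw [h1, my_defect (t ^ k) (b i), star_pow,
        Finset.sum_range_sub' (fun j => ‖((star t) ^ j) (b i)‖ ^ 2)]
      simp
    rw [opTrace]
    calc ∑' i, ENNReal.ofReal ((inner ℂ (b i) ((1 - t ^ k * (star t) ^ k) (b i)) : ℂ).re)
        = ∑' i, ∑ j ∈ range k, ENNReal.ofReal
            (‖((star t) ^ j) (b i)‖ ^ 2 - ‖((star t) ^ (j+1)) (b i)‖ ^ 2) := by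
          refine tsum_congr (fun i => ?_)
          rw [hper i, ENNReal.ofReal_sum_of_nonneg]
          intro j _
          have h := hcon_spow j (b i)
          nlinarith [norm_nonneg (((star t) ^ (j+1)) (b i)), norm_nonneg (((star t) ^ j) (b i))]
      _ = ∑ j ∈ range k, ∑' i, ENNReal.ofReal
            (‖((star t) ^ j) (b i)‖ ^ 2 - ‖((star t) ^ (j+1)) (b i)‖ ^ 2) :=
          Summable.tsum_finsetSum (fun j _ => ENNReal.summable)
      _ = ∑ j ∈ range k, a j := by
          refine Finset.sum_congr rfl (fun j _ => ?_)
          rw [← flipC j]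
          refine tsum_congr (fun i => ?_)
          congr 1
          rw [hCnorm (((star t) ^ j) (b i)), hpow_succ]
  -- a 0 is the trace of 1 - t t*
  have htr1 : opTrace b (1 - t * star t) = a 0 := by
    have h1 : (1 : H →L[ℂ] H) - t * star t = 1 - t ^ 1 * (star t) ^ 1 := by
      rw [pow_one, pow_one]
    rw [h1, traceB 1, Finset.sum_range_one]
  have ha0fin : a 0 ≠ ⊤ := htr1 ▸ hfin
  -- real-valued summability
  have hsum0 : Summable (fun i => u i 0) := by
    have h2 := ENNReal.summable_toReal ha0fin
    refine h2.congr (fun i => ?_)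
    exact ENNReal.toReal_ofReal (hu_nonneg i 0)
  have hsums : ∀ j, Summable (fun i => u i j) := fun j =>
    Summable.of_nonneg_of_le (fun i => hu_nonneg i j) (fun i => hu_anti i (Nat.zero_le j)) hsum0
  have hsuml : Summable l := Summable.of_nonneg_of_le hl_nonneg hl_le hsum0
  set α : ℕ → ℝ := fun j => ∑' i, u i j with halphadef
  set lam : ℝ := ∑' i, l i with hlamdef
  have halpha : Tendsto α atTop (𝓝 lam) := by
    refine tendsto_tsum_of_dominated_convergence (f := fun j i => u i j) (g := l)
      (bound := fun i => u i 0) hsum0 (fun i => hl_tend i) ?_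
    filter_upwards with j i
    rw [Real.norm_of_nonneg (hu_nonneg i j)]
    exact hu_anti i (Nat.zero_le j)
  have haeq : ∀ j, a j = ENNReal.ofReal (α j) := fun j =>
    (ENNReal.ofReal_tsum_of_nonneg (fun i => hu_nonneg i j) (hsums j)).symm
  set L : ℝ≥0∞ := ENNReal.ofReal lam with hLdef
  have hLeq : (∑' i, ENNReal.ofReal (l i)) = L :=
    (ENNReal.ofReal_tsum_of_nonneg hl_nonneg hsuml).symm
  -- the Cesàro limit
  have htend : Tendsto (fun k : ℕ => opTrace b (1 - t ^ k * (star t) ^ k) / (k : ℝ≥0∞))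
      atTop (𝓝 L) := by
    have hc : Tendsto (fun n : ℕ => (n : ℝ)⁻¹ * ∑ j ∈ range n, α j) atTop (𝓝 lam) :=
      halpha.cesaro
    have h2 : Tendsto (fun n : ℕ => ENNReal.ofReal ((n : ℝ)⁻¹ * ∑ j ∈ range n, α j))
        atTop (𝓝 L) := (ENNReal.continuous_ofReal.tendsto lam).comp hc
    refine Tendsto.congr' ?_ h2
    filter_upwards [eventually_ge_atTop 1] with n hn
    have hnpos : (0 : ℝ) < n := by exact_mod_cast Nat.lt_of_lt_of_le Nat.zero_lt_one hn
    have hS : ∀ j ∈ range n, (0:ℝ) ≤ α j := fun j _ => tsum_nonneg (fun i => hu_nonneg i j)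
    rw [traceB n]
    have h3 : ∑ j ∈ range n, a j = ENNReal.ofReal (∑ j ∈ range n, α j) := by
      rw [ENNReal.ofReal_sum_of_nonneg hS]
      exact Finset.sum_congr rfl (fun j _ => haeq j)
    rw [h3, ENNReal.ofReal_mul (inv_nonneg.mpr hnpos.le), ENNReal.ofReal_inv_of_pos hnpos,
      ENNReal.ofReal_natCast, div_eq_mul_inv, mul_comm]
  -- the per-basis-vector telescope
  have hper2 : ∀ i, ENNReal.ofReal (u i 0)
      = ENNReal.ofReal (l i) + ∑' j, ENNReal.ofReal (u i j - u i (j+1)) := by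
    intro i
    rw [my_telescope (u i) (hu_succ i) (hl_tend i),
      ← ENNReal.ofReal_add (hl_nonneg i) (sub_nonneg.mpr (hl_le i)),
      show l i + (u i 0 - l i) = u i 0 from by ring]
  have h1 : a 0 = L + ∑' i, ∑' j, ENNReal.ofReal (u i j - u i (j+1)) := by
    calc a 0 = ∑' i, (ENNReal.ofReal (l i) + ∑' j, ENNReal.ofReal (u i j - u i (j+1))) :=
          tsum_congr hper2
      _ = (∑' i, ENNReal.ofReal (l i)) + ∑' i, ∑' j, ENNReal.ofReal (u i j - u i (j+1)) :=
          ENNReal.tsum_add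
      _ = L + ∑' i, ∑' j, ENNReal.ofReal (u i j - u i (j+1)) := by rw [hLeq]
  have hdiff : ∀ i j, u i j - u i (j+1) = ‖E ((t ^ j) (C (b i)))‖ ^ 2 := by
    intro i j
    simp only [hu]
    rw [hEnorm ((t ^ j) (C (b i))), hpow_succ]
  have hstep1 : ∀ j i, ENNReal.ofReal (u i j - u i (j+1))
      = ENNReal.ofReal (‖(E * (t ^ j * C)) (b i)‖ ^ 2) := by
    intro j i
    rw [hdiff i j]
    rfl
  have hstar2 : ∀ j : ℕ, star (E * (t ^ j * C)) = C * ((star t) ^ j * E) := by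
    intro j
    rw [star_mul, star_mul, star_pow, hEsa.star_eq, hCsa.star_eq, mul_assoc]
  have hperi : ∀ i, (∑' j, ENNReal.ofReal (‖(C * ((star t) ^ j * E)) (b i)‖ ^ 2))
      = ENNReal.ofReal (‖E (b i)‖ ^ 2) := by
    intro i
    set w : ℕ → ℝ := fun j => ‖((star t) ^ j) (E (b i))‖ ^ 2 with hwdef
    have hw_succ : ∀ j, w (j+1) ≤ w j := by
      intro j
      have h := hcon_spow j (E (b i))
      simp only [hwdef]
      nlinarith [norm_nonneg (((star t) ^ (j+1)) (E (b i))),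
        norm_nonneg (((star t) ^ j) (E (b i)))]
    have hw_eq : ∀ j, w j = (inner ℂ (E (b i)) ((t ^ j * (star t) ^ j) (E (b i))) : ℂ).re := by
      intro j
      have hA : (inner ℂ (E (b i)) ((t ^ j * (star t) ^ j) (E (b i))) : ℂ)
          = inner ℂ (((star t) ^ j) (E (b i))) (((star t) ^ j) (E (b i))) := by
        rw [ContinuousLinearMap.mul_apply, ← ContinuousLinearMap.adjoint_inner_left,
          ← ContinuousLinearMap.star_eq_adjoint, star_pow]
      rw [hA, ← RCLike.re_to_complex]
      exact (inner_self_eq_norm_sq _).symm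
    have hw0 : Tendsto w atTop (𝓝 0) := by
      have hp := hpure (E (b i))
      have hcont : Continuous fun z : H => ((inner ℂ (E (b i)) z : ℂ)).re :=
        Complex.continuous_re.comp (continuous_const.inner continuous_id)
      have h2 := (hcont.tendsto 0).comp hp
      simp only [Function.comp, inner_zero_right, Complex.zero_re] at h2
      exact h2.congr (fun j => (hw_eq j).symm)
    have htel := my_telescope w hw_succ hw0
    have hterm : ∀ j, ‖(C * ((star t) ^ j * E)) (b i)‖ ^ 2 = w j - w (j+1) := by
      intro j
      have e1 : (C * ((star t) ^ j * E)) (b i) = C (((star t) ^ j) (E (b i))) := by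
        simp [ContinuousLinearMap.mul_apply]
      rw [e1, hCnorm (((star t) ^ j) (E (b i)))]
      simp only [hwdef]
      rw [hpow_succ (star t) j (E (b i))]
    calc ∑' j, ENNReal.ofReal (‖(C * ((star t) ^ j * E)) (b i)‖ ^ 2)
        = ∑' j, ENNReal.ofReal (w j - w (j+1)) := tsum_congr fun j => by rw [hterm j]
      _ = ENNReal.ofReal (w 0 - 0) := htel
      _ = ENNReal.ofReal (‖E (b i)‖ ^ 2) := by
          simp only [hwdef, pow_zero, ContinuousLinearMap.one_apply, sub_zero]
  have hR : (∑' i, ∑' j, ENNReal.ofReal (u i j - u i (j+1)))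
      = opTrace b (1 - star t * t) := by
    calc ∑' i, ∑' j, ENNReal.ofReal (u i j - u i (j+1))
        = ∑' j, ∑' i, ENNReal.ofReal (‖(E * (t ^ j * C)) (b i)‖ ^ 2) := by
          rw [ENNReal.tsum_comm]
          exact tsum_congr fun j => tsum_congr fun i => hstep1 j i
      _ = ∑' j, ∑' i, ENNReal.ofReal (‖(C * ((star t) ^ j * E)) (b i)‖ ^ 2) := by
          refine tsum_congr fun j => ?_
          have h := my_flip b (E * (t ^ j * C))
          rwa [hstar2 j] at h
      _ = ∑' i, ∑' j, ENNReal.ofReal (‖(C * ((star t) ^ j * E)) (b i)‖ ^ 2) :=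
          ENNReal.tsum_comm
      _ = ∑' i, ENNReal.ofReal (‖E (b i)‖ ^ 2) := tsum_congr hperi
      _ = opTrace b (1 - star t * t) := by
          rw [opTrace]
          refine tsum_congr fun i => ?_
          congr 1
          have he : (1 : H →L[ℂ] H) - star t * t = 1 - star t * star (star t) := by
            rw [star_star]
          rw [hEnorm (b i), he, my_defect (star t) (b i), star_star]
  have hmain : a 0 = L + opTrace b (1 - star t * t) := by rw [h1, hR]
  have hfinD : opTrace b (1 - star t * t) ≠ ⊤ := by
    intro hc
    apply ha0fin
    rw [hmain, hc, add_top]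
  refine ⟨hfinD, L, htend, ?_⟩
  rw [htr1, hmain]
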